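/- Let Ω be a bounded hyperconvex domain in ℂ^n containing the origin 0 and let φ be a plurisubharmonic function on Ω. Then for all real numbers s > t > -n one has c_s(φ) ≤ ((s+n)/(t+n))·c_t(φ), where the inequality is understood in the extended reals [0,+∞]. -/

import Mathlib

open MeasureTheory Filter Metric Topology Complex
open scoped ENNReal EReal

noncomputable section

/-- `ℂ^n` with its Euclidean (Hermitian) norm. -/
abbrev Cn (n : ℕ) : Type := EuclideanSpace ℂ (Fin n)

/-- Lebesgue measure on `ℂ^n ≅ ℝ^{2n}`. -/
instance Cn.measureSpace (n : ℕ) : MeasureSpace (Cn n) :=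
  { toMeasurableSpace := inferInstance
    volume := Measure.map (MeasurableEquiv.toLp 2 (Fin n → ℂ)) volume }

/-- Extended-real-valued logarithm, sending `0` (and negative numbers) to `-∞`. -/
def elog (x : ℝ) : EReal := if x ≤ 0 then (⊥ : EReal) else ((Real.log x : ℝ) : EReal)

/-- `exp : EReal → ℝ≥0∞`, with `exp (-∞) = 0` and `exp (+∞) = +∞`. -/
def erealExp (x : EReal) : ℝ≥0∞ :=
  if x = ⊤ then ⊤ else if x = ⊥ then 0 else ENNReal.ofReal (Real.exp x.toReal)

/-- The positive part of an extended real number, as an element of `ℝ≥0∞`. -/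
def erealPosPart (x : EReal) : ℝ≥0∞ := if x = ⊤ then ⊤ else ENNReal.ofReal x.toReal

/-- The integral of an `EReal`-valued function: upper integral of the positive part minus the
upper integral of the negative part. -/
def erealIntegral {α : Type*} [MeasurableSpace α] (μ : Measure α) (f : α → EReal) : EReal :=
  ((∫⁻ a, erealPosPart (f a) ∂μ : ℝ≥0∞) : EReal) -
    ((∫⁻ a, erealPosPart (-(f a)) ∂μ : ℝ≥0∞) : EReal)

/-- A function `f : ℂ → [-∞, ∞)` is subharmonic on an open set `U ⊆ ℂ` if it is upper
semicontinuous on `U` and satisfies the sub-mean value inequality on circles contained in `U`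
(written in the form `2π · f(z) ≤ ∫_0^{2π} f(z + r e^{iθ}) dθ`). -/
def SubhOn (f : ℂ → EReal) (U : Set ℂ) : Prop :=
  UpperSemicontinuousOn f U ∧
  ∀ z ∈ U, ∀ r : ℝ, 0 < r → closedBall z r ⊆ U →
    ((2 * Real.pi : ℝ) : EReal) * f z ≤
      erealIntegral (volume.restrict (Set.Ioc (0:ℝ) (2 * Real.pi)))
        (fun θ : ℝ => f (z + (r : ℂ) * Complex.exp (θ * Complex.I)))

/-- A function `φ : ℂ^n → [-∞, ∞)` is plurisubharmonic on `Ω` if it is upper semicontinuous on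
`Ω`, not identically `-∞`, never `+∞`, and its restriction to every complex line is subharmonic. -/
def PshOn {n : ℕ} (φ : Cn n → EReal) (Ω : Set (Cn n)) : Prop :=
  UpperSemicontinuousOn φ Ω ∧ (∃ z ∈ Ω, φ z ≠ ⊥) ∧ (∀ z ∈ Ω, φ z ≠ ⊤) ∧
  ∀ a v : Cn n, SubhOn (fun w : ℂ => φ (a + w • v)) {w : ℂ | a + w • v ∈ Ω}

/-- A domain in `ℂ^n`: a nonempty connected open set. -/
def IsCnDomain {n : ℕ} (Ω : Set (Cn n)) : Prop := IsOpen Ω ∧ IsConnected Ω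

/-- The Lelong number of `φ` at the origin: `ν_φ(0) = liminf_{z → 0} φ(z) / log ‖z‖`. -/
def lelong {n : ℕ} (φ : Cn n → EReal) : EReal :=
  liminf (fun z : Cn n => φ z * (((Real.log ‖z‖)⁻¹ : ℝ) : EReal)) (𝓝[≠] (0 : Cn n))

/-- The Lelong number at `0` of the restriction of `φ` to the complex line through `0` with
direction `v`: `ν_{φ|_l}(0) = liminf_{λ → 0} φ(λ v) / log |λ|`. -/
def lelongLine {n : ℕ} (φ : Cn n → EReal) (v : Cn n) : EReal :=
  liminf (fun w : ℂ => φ (w • v) * (((Real.log ‖w‖)⁻¹ : ℝ) : EReal)) (𝓝[≠] (0 : ℂ))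

/-- `‖z‖^{2t} e^{-2cφ}` is (Lebesgue) integrable on some neighborhood of the origin. -/
def lctIntegrable {n : ℕ} (t c : ℝ) (φ : Cn n → EReal) : Prop :=
  ∃ U ∈ 𝓝 (0 : Cn n),
    (∫⁻ z in U, ENNReal.ofReal (‖z‖ ^ (2 * t)) *
        erealExp (((-(2 * c) : ℝ) : EReal) * φ z) ∂volume) < ⊤

/-- The weighted log canonical threshold
`c_t(φ) = sup {c ≥ 0 : ‖z‖^{2t} e^{-2cφ}` is integrable near `0}`, as an element of `[0, ∞]`. -/
def lct {n : ℕ} (t : ℝ) (φ : Cn n → EReal) : ℝ≥0∞ :=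
  ⨆ c ∈ {c : ℝ | 0 ≤ c ∧ lctIntegrable t c φ}, ENNReal.ofReal c

/-- A bounded domain `Ω ⊆ ℂⁿ` is hyperconvex if it carries a negative plurisubharmonic
exhaustion function `ρ`, i.e. `{ρ < -ε}` is relatively compact in `Ω` for every `ε > 0`. -/
def IsHyperconvex {n : ℕ} (Ω : Set (Cn n)) : Prop :=
  IsCnDomain Ω ∧ Bornology.IsBounded Ω ∧
  ∃ ρ : Cn n → EReal, PshOn ρ Ω ∧ (∀ z ∈ Ω, ρ z < 0) ∧
    ∀ ε : ℝ, 0 < ε →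
      IsCompact (closure {z | z ∈ Ω ∧ ρ z < ((-ε : ℝ) : EReal)}) ∧
      closure {z | z ∈ Ω ∧ ρ z < ((-ε : ℝ) : EReal)} ⊆ Ω


/-! ### Auxiliary lemmas -/

open Module in
instance Cn.isAddHaarMeasure (n : ℕ) : (volume : Measure (Cn n)).IsAddHaarMeasure :=
  (WithLp.linearEquiv 2 ℝ (Fin n → ℂ)).symm.toContinuousLinearEquiv.isAddHaarMeasure_map
    (volume : Measure (Fin n → ℂ))

instance Cn.borelSpace (n : ℕ) : BorelSpace (Cn n) :=
  inferInstance

instance Cn.noAtoms (n : ℕ) [NeZero n] : NullSingletonClass (volume : Measure (Cn n)) :=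
  inferInstance

lemma Cn.finrank_eq (n : ℕ) : Module.finrank ℝ (Cn n) = 2 * n := by
  rw [show Module.finrank ℝ (Cn n) = Module.finrank ℝ (Fin n → ℂ) from
    (WithLp.linearEquiv 2 ℝ (Fin n → ℂ)).finrank_eq]
  simp [Module.finrank_pi_fintype, Complex.finrank_real_complex, mul_comm]

open Module in
lemma lintegral_ball_rpow_lt_top {n : ℕ} (hn : 0 < n) {α : ℝ} (hα : -(2 * (n : ℝ)) < α) :
    (∫⁻ z in ball (0 : Cn n) 1, ENNReal.ofReal (‖z‖ ^ α) ∂volume) < ⊤ := by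
  haveI : NeZero n := ⟨hn.ne'⟩
  haveI : Nontrivial (Cn n) := by
    have : Nontrivial (Fin n → ℂ) := Pi.nontrivial
    exact (WithLp.linearEquiv 2 ℝ (Fin n → ℂ)).toEquiv.nontrivial
  set d : ℕ := finrank ℝ (Cn n) with hd
  have hd2 : d = 2 * n := Cn.finrank_eq n
  set g : ℝ → ℝ≥0∞ := fun y => Set.indicator (Set.Iio (1:ℝ)) (fun y => ENNReal.ofReal (y ^ α)) y with hgdef
  have hgm : Measurable g := by
    apply Measurable.indicator _ measurableSet_Iio
    exact (measurable_id.pow_const α).ennreal_ofReal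
  have step0 : (∫⁻ z in ball (0 : Cn n) 1, ENNReal.ofReal (‖z‖ ^ α) ∂volume)
      ≤ ∫⁻ z : Cn n, g ‖z‖ ∂volume := by
    rw [← lintegral_indicator measurableSet_ball]
    refine lintegral_mono fun z => ?_
    by_cases hz : z ∈ ball (0 : Cn n) 1
    · rw [Set.indicator_of_mem hz]
      simp only [hgdef]
      rw [Set.indicator_of_mem (by simpa [Set.mem_Iio] using mem_ball_zero_iff.1 hz)]
    · rw [Set.indicator_of_notMem hz]; exact zero_le
  have step1 : (∫⁻ z : Cn n, g ‖z‖ ∂volume)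
      = ∫⁻ x : ({(0 : Cn n)}ᶜ : Set (Cn n)), g ‖x.1‖ ∂((volume : Measure (Cn n)).comap (↑)) := by
    rw [lintegral_subtype_comap (measurableSet_singleton (0 : Cn n)).compl (fun z => g ‖z‖),
      restrict_compl_singleton]
  have step2 : (∫⁻ x : ({(0 : Cn n)}ᶜ : Set (Cn n)), g ‖x.1‖ ∂((volume : Measure (Cn n)).comap (↑)))
      = ∫⁻ p : sphere (0 : Cn n) 1 × Set.Ioi (0:ℝ), g p.2.1
          ∂((volume : Measure (Cn n)).toSphere.prod (.volumeIoiPow (d - 1))) := by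
    rw [← (Measure.measurePreserving_homeomorphUnitSphereProd
        (volume : Measure (Cn n))).lintegral_comp
        (f := fun p : sphere (0 : Cn n) 1 × Set.Ioi (0:ℝ) => g p.2.1)
        (hgm.comp (measurable_subtype_coe.comp measurable_snd))]
    exact lintegral_congr fun x => by simp
  have step3 : (∫⁻ p : sphere (0 : Cn n) 1 × Set.Ioi (0:ℝ), g p.2.1
          ∂((volume : Measure (Cn n)).toSphere.prod (.volumeIoiPow (d - 1))))
      = (∫⁻ r : Set.Ioi (0:ℝ), g r.1 ∂(Measure.volumeIoiPow (d - 1)))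
          * (volume : Measure (Cn n)).toSphere Set.univ := by
    have hm : Measurable (fun p : sphere (0 : Cn n) 1 × Set.Ioi (0:ℝ) => g p.2.1) :=
      hgm.comp (measurable_subtype_coe.comp measurable_snd)
    rw [lintegral_prod _ hm.aemeasurable]
    have he : ∀ x : sphere (0 : Cn n) 1,
        (∫⁻ y : Set.Ioi (0:ℝ), g ((x, y).2 : Set.Ioi (0:ℝ)).1 ∂Measure.volumeIoiPow (d - 1))
        = ∫⁻ r : Set.Ioi (0:ℝ), g r.1 ∂Measure.volumeIoiPow (d - 1) := fun _ => rfl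
    simp only [he]
    rw [lintegral_const]
  have step4 : (∫⁻ r : Set.Ioi (0:ℝ), g r.1 ∂(Measure.volumeIoiPow (d - 1)))
      = ∫⁻ y in Set.Ioi (0:ℝ), ENNReal.ofReal (y ^ (d - 1)) * g y ∂volume := by
    rw [Measure.volumeIoiPow,
      lintegral_withDensity_eq_lintegral_mul _
        ((measurable_subtype_coe.pow_const _).ennreal_ofReal)
        (show Measurable (fun r : Set.Ioi (0:ℝ) => g r.1) from hgm.comp measurable_subtype_coe)]
    exact lintegral_subtype_comap measurableSet_Ioi
      (fun y : ℝ => ENNReal.ofReal (y ^ (d - 1)) * g y)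
  set β : ℝ := (d : ℝ) - 1 + α with hβdef
  have hβ : -1 < β := by
    rw [hβdef, hd2]; push_cast; linarith
  have hfin : (∫⁻ y in Set.Ioi (0:ℝ), ENNReal.ofReal (y ^ (d - 1)) * g y ∂volume) < ⊤ := by
    have hEq : ∀ y : ℝ, ENNReal.ofReal (y ^ (d - 1)) * g y
        = Set.indicator (Set.Iio (1:ℝ))
            (fun y => ENNReal.ofReal (y ^ (d - 1)) * ENNReal.ofReal (y ^ α)) y := by
      intro y
      by_cases h : y ∈ Set.Iio (1:ℝ) <;>
        simp [hgdef, Set.indicator_of_mem, Set.indicator_of_notMem, h]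
    calc (∫⁻ y in Set.Ioi (0:ℝ), ENNReal.ofReal (y ^ (d - 1)) * g y ∂volume)
        = ∫⁻ y in Set.Ioi (0:ℝ), Set.indicator (Set.Iio (1:ℝ))
            (fun y => ENNReal.ofReal (y ^ (d - 1)) * ENNReal.ofReal (y ^ α)) y ∂volume :=
          lintegral_congr fun y => hEq y
      _ = ∫⁻ y in Set.Ioo (0:ℝ) 1,
            ENNReal.ofReal (y ^ (d - 1)) * ENNReal.ofReal (y ^ α) ∂volume := by
          rw [lintegral_indicator measurableSet_Iio, Measure.restrict_restrict measurableSet_Iio,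
            Set.Iio_inter_Ioi]
      _ = ∫⁻ y in Set.Ioo (0:ℝ) 1, ENNReal.ofReal (y ^ β) ∂volume := by
          refine setLIntegral_congr_fun measurableSet_Ioo (fun y hy => ?_)
          rw [← ENNReal.ofReal_mul (pow_nonneg hy.1.le _), hβdef,
            ← Real.rpow_natCast y (d - 1), ← Real.rpow_add hy.1,
            Nat.cast_sub (by omega : 1 ≤ d), Nat.cast_one]
      _ < ⊤ := by
          have hii : IntervalIntegrable (fun y : ℝ => y ^ β) volume 0 1 :=
            intervalIntegral.intervalIntegrable_rpow' hβ
          have hio : IntegrableOn (fun y : ℝ => y ^ β) (Set.Ioo (0:ℝ) 1) volume :=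
            ((intervalIntegrable_iff_integrableOn_Ioc_of_le (by norm_num)).1 hii).mono_set
              Set.Ioo_subset_Ioc_self
          have h0 : (0 : ℝ → ℝ) ≤ᵐ[volume.restrict (Set.Ioo (0:ℝ) 1)] fun y : ℝ => y ^ β := by
            filter_upwards [ae_restrict_mem measurableSet_Ioo] with y hy
            exact Real.rpow_nonneg hy.1.le β
          exact lt_top_iff_ne_top.2 ((lintegral_ofReal_ne_top_iff_integrable
            ((measurable_id.pow_const β).aestronglyMeasurable) h0).2 hio)
  refine step0.trans_lt ?_
  rw [step1, step2, step3, step4]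
  exact ENNReal.mul_lt_top hfin (measure_lt_top _ _)

lemma erealExp_coe (x : ℝ) : erealExp (x : EReal) = ENNReal.ofReal (Real.exp x) := by
  simp [erealExp]

lemma lctIntegrable_of_lt {n : ℕ} (hn : 0 < n) (φ : Cn n → EReal) {s t c θ : ℝ}
    (ht : -(n : ℝ) < t) (hst : t < s) (hc : 0 < c) (hθ0 : 0 < θ)
    (hθ : θ < (t + n) / (s + n)) (hint : lctIntegrable s c φ) :
    lctIntegrable t (θ * c) φ := by
  haveI : NeZero n := ⟨hn.ne'⟩
  have htn : (0:ℝ) < t + n := by linarith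
  have hsn : (0:ℝ) < s + n := by linarith
  have hθ1 : θ < 1 := hθ.trans_le (by rw [div_le_one hsn]; linarith)
  have h1θ : (0:ℝ) < 1 - θ := by linarith
  set α : ℝ := (2 * t - θ * (2 * s)) / (1 - θ) with hα
  have hαgt : -(2 * (n : ℝ)) < α := by
    rw [hα, lt_div_iff₀ h1θ]
    nlinarith [(lt_div_iff₀ hsn).1 hθ]
  obtain ⟨U, hU, hUfin⟩ := hint
  refine ⟨U ∩ ball (0 : Cn n) 1, Filter.inter_mem hU (ball_mem_nhds _ one_pos), ?_⟩
  set F : Cn n → ℝ≥0∞ :=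
    fun z => ENNReal.ofReal (‖z‖ ^ (2 * s)) * erealExp (((-(2 * c) : ℝ) : EReal) * φ z) with hF
  set H : Cn n → ℝ≥0∞ := fun z => ENNReal.ofReal (‖z‖ ^ α) with hH
  have hHm : Measurable H := (measurable_norm.pow_const α).ennreal_ofReal
  -- pointwise bound away from the origin
  have hpt : ∀ z : Cn n, z ≠ 0 →
      ENNReal.ofReal (‖z‖ ^ (2 * t)) * erealExp (((-(2 * (θ * c)) : ℝ) : EReal) * φ z)
        ≤ H z + F z := by
    intro z hz
    have hN : (0:ℝ) < ‖z‖ := norm_pos_iff.2 hz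
    simp only [hH, hF]
    generalize φ z = x
    induction x using EReal.rec with
    | bot =>
        have h1 : ((-(2 * c) : ℝ) : EReal) * ⊥ = ⊤ :=
          EReal.coe_mul_bot_of_neg (by nlinarith)
        have h2 : ((-(2 * (θ * c)) : ℝ) : EReal) * ⊥ = ⊤ :=
          EReal.coe_mul_bot_of_neg (by nlinarith)
        have h3 : erealExp ⊤ = ⊤ := by simp [erealExp]
        have h4 : ENNReal.ofReal (‖z‖ ^ (2 * s)) * ⊤ = ⊤ :=
          ENNReal.mul_top (ENNReal.ofReal_pos.2 (Real.rpow_pos_of_pos hN _)).ne'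
        rw [h1, h2, h3, h4]
        simp
    | top =>
        have h1 : ((-(2 * (θ * c)) : ℝ) : EReal) * ⊤ = ⊥ :=
          EReal.coe_mul_top_of_neg (by nlinarith)
        rw [h1]
        simp [erealExp]
    | coe r =>
        rw [← EReal.coe_mul, ← EReal.coe_mul, erealExp_coe, erealExp_coe,
          ← ENNReal.ofReal_mul (Real.rpow_nonneg hN.le _),
          ← ENNReal.ofReal_mul (Real.rpow_nonneg hN.le _),
          ← ENNReal.ofReal_add (Real.rpow_nonneg hN.le _)
            (mul_nonneg (Real.rpow_nonneg hN.le _) (Real.exp_nonneg _))]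
        apply ENNReal.ofReal_le_ofReal
        set N := ‖z‖
        set A : ℝ := N ^ (2 * s) * Real.exp (-(2 * c) * r) with hA
        set B : ℝ := N ^ α with hB
        have hApos : 0 < A := by
          apply mul_pos (Real.rpow_pos_of_pos hN _) (Real.exp_pos _)
        have hBpos : 0 < B := Real.rpow_pos_of_pos hN _
        have e1 : A ^ θ = N ^ (2 * s * θ) * Real.exp (-(2 * c) * r * θ) := by
          rw [hA, Real.mul_rpow (Real.rpow_nonneg hN.le _) (Real.exp_nonneg _),
            ← Real.rpow_mul hN.le, ← Real.exp_mul]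
        have e2 : B ^ (1 - θ) = N ^ (2 * t - θ * (2 * s)) := by
          rw [hB, ← Real.rpow_mul hN.le, hα, div_mul_cancel₀ _ h1θ.ne']
        have hid : A ^ θ * B ^ (1 - θ) = N ^ (2 * t) * Real.exp (-(2 * (θ * c)) * r) := by
          rw [e1, e2, mul_right_comm, ← Real.rpow_add hN,
            show 2 * s * θ + (2 * t - θ * (2 * s)) = 2 * t by ring,
            show -(2 * c) * r * θ = -(2 * (θ * c)) * r by ring]
        rw [← hid]
        have hAB : (0:ℝ) < A + B := by linarith
        calc A ^ θ * B ^ (1 - θ)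
            ≤ (A + B) ^ θ * (A + B) ^ (1 - θ) := by
              apply mul_le_mul (Real.rpow_le_rpow hApos.le (by linarith) hθ0.le)
                (Real.rpow_le_rpow hBpos.le (by linarith) h1θ.le)
                (Real.rpow_nonneg hBpos.le _) (Real.rpow_nonneg hAB.le _)
          _ = A + B := by
              rw [← Real.rpow_add hAB]
              norm_num
          _ ≤ B + A := by linarith
  -- now integrate
  have hae : ∀ᵐ z ∂(volume.restrict (U ∩ ball (0 : Cn n) 1)),
      ENNReal.ofReal (‖z‖ ^ (2 * t)) * erealExp (((-(2 * (θ * c)) : ℝ) : EReal) * φ z)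
        ≤ H z + F z := by
    refine ae_restrict_of_ae ?_
    have h0 : ∀ᵐ z : Cn n ∂volume, z ≠ 0 := by
      rw [ae_iff]
      have : {z : Cn n | ¬z ≠ 0} = {0} := by ext z; simp
      rw [this]
      exact measure_singleton _
    filter_upwards [h0] with z hz using hpt z hz
  calc (∫⁻ z in U ∩ ball (0 : Cn n) 1, ENNReal.ofReal (‖z‖ ^ (2 * t)) *
          erealExp (((-(2 * (θ * c)) : ℝ) : EReal) * φ z) ∂volume)
      ≤ ∫⁻ z in U ∩ ball (0 : Cn n) 1, (H z + F z) ∂volume := lintegral_mono_ae hae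
    _ = (∫⁻ z in U ∩ ball (0 : Cn n) 1, H z ∂volume)
        + ∫⁻ z in U ∩ ball (0 : Cn n) 1, F z ∂volume := lintegral_add_left hHm _
    _ < ⊤ := by
        apply ENNReal.add_lt_top.2
        constructor
        · exact ((lintegral_mono_set Set.inter_subset_right).trans_lt
            (lintegral_ball_rpow_lt_top hn hαgt))
        · exact ((lintegral_mono_set Set.inter_subset_left).trans_lt hUfin)

/-- On a bounded hyperconvex domain `Ω ∋ 0`, for all `s > t > -n` one has
`c_s(φ) ≤ ((s+n)/(t+n))·c_t(φ)` in `[0,∞]`. -/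
theorem statement10 {n : ℕ} (hn : 0 < n) (Ω : Set (Cn n)) (hΩ : IsHyperconvex Ω)
    (h0 : (0 : Cn n) ∈ Ω) (φ : Cn n → EReal) (hφ : PshOn φ Ω)
    (s t : ℝ) (hst : t < s) (ht : -(n : ℝ) < t) :
    lct s φ ≤ ENNReal.ofReal ((s + n) / (t + n)) * lct t φ := by
  have htn : (0:ℝ) < t + n := by linarith
  have hsn : (0:ℝ) < s + n := by linarith
  have hratio : (0:ℝ) < (t + n) / (s + n) := div_pos htn hsn
  refine iSup₂_le fun c hc => ?_
  obtain ⟨hc0, hcint⟩ := hc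
  rcases hc0.eq_or_lt with rfl | hcpos
  · simp
  have hkey : ∀ θ : ℝ, 0 < θ → θ < (t + n) / (s + n) →
      ENNReal.ofReal (θ * c) ≤ lct t φ := by
    intro θ h1 h2
    have hint : lctIntegrable t (θ * c) φ := lctIntegrable_of_lt hn φ ht hst hcpos h1 h2 hcint
    exact le_biSup _ ⟨mul_nonneg h1.le hc0, hint⟩
  rcases eq_top_or_lt_top (lct t φ) with htop | hlt
  · rw [htop, ENNReal.mul_top
      (ENNReal.ofReal_pos.2 (div_pos hsn htn)).ne']
    exact le_top
  · set M := (lct t φ).toReal with hM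
    have hM0 : 0 ≤ M := ENNReal.toReal_nonneg
    have hMle : ∀ θ : ℝ, 0 < θ → θ < (t + n) / (s + n) → θ * c ≤ M := by
      intro θ h1 h2
      have h3 := hkey θ h1 h2
      rw [← ENNReal.ofReal_toReal hlt.ne, ← hM] at h3
      exact (ENNReal.ofReal_le_ofReal_iff hM0).1 h3
    have hrc : (t + n) / (s + n) * c ≤ M := by
      refine le_of_forall_pos_le_add fun ε hε => ?_
      set δ : ℝ := min (ε / c) ((t + n) / (s + n) / 2) with hδ
      have hδ0 : 0 < δ := lt_min (div_pos hε hcpos) (by linarith)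
      have hδ1 : δ ≤ ε / c := min_le_left _ _
      have hδ2 : δ ≤ (t + n) / (s + n) / 2 := min_le_right _ _
      have hθ := hMle ((t + n) / (s + n) - δ) (by linarith) (by linarith)
      have : δ * c ≤ ε := by
        rw [← le_div_iff₀ hcpos]; exact hδ1
      nlinarith
    have hfinal : c ≤ (s + n) / (t + n) * M := by
      have h4 : (t + n) / (s + n) * c * ((s + n) / (t + n)) = c := by
        field_simp
      have h5 := mul_le_mul_of_nonneg_right hrc (le_of_lt (div_pos hsn htn))
      rw [h4] at h5
      linarith [h5]
    calc ENNReal.ofReal c ≤ ENNReal.ofReal ((s + n) / (t + n) * M) :=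
          ENNReal.ofReal_le_ofReal hfinal
      _ = ENNReal.ofReal ((s + n) / (t + n)) * ENNReal.ofReal M :=
          ENNReal.ofReal_mul (by positivity)
      _ = ENNReal.ofReal ((s + n) / (t + n)) * lct t φ := by
          rw [hM, ENNReal.ofReal_toReal hlt.ne]

end
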